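/- Suppose f(x_c) > x_c and fᵏ(a) < x_c, fᵏ(b) < x_c for all k ≥ 1. Let x_k = min S^k be the leftmost critical point of fᵏ. Then for all k ≥ 2: x_k < x_{k-1}, fᵏ has a local maximum at x_k with (fᵏ)''(x_k) < 0, and fᵏ(x_k) = f(x_c) > x_c. -/

import Mathlib

open Set

private def InvP (f : ℝ → ℝ) (a x_c : ℝ) (xs : ℕ → ℝ) (k : ℕ) : Prop :=
  f^[k] (xs (k+1)) = x_c ∧ (∀ i < k, f^[i] (xs (k+1)) < x_c) ∧
    (∀ x ∈ Set.Ico a (xs (k+1)), ∀ i ≤ k, f^[i] x < x_c)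

theorem leftmost_crit_point_positive_max
    (a b x_c : ℝ) (f : ℝ → ℝ) (hab : a < b)
    (hmap : Set.MapsTo f (Set.Icc a b) (Set.Icc a b))
    (hf : ContDiff ℝ 2 f)
    (hxc : x_c ∈ Set.Ioo a b)
    (h2 : deriv (deriv f) x_c < 0)
    (hup : ∀ x ∈ Set.Ico a x_c, 0 < deriv f x)
    (hdn : ∀ x ∈ Set.Ioc x_c b, deriv f x < 0)
    (hc : f x_c > x_c)
    (hbd : ∀ k : ℕ, 1 ≤ k → f^[k] a < x_c ∧ f^[k] b < x_c)
    (xs : ℕ → ℝ)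
    (hxs : ∀ k : ℕ, 1 ≤ k →
      IsLeast {x ∈ Icc a b | deriv (f^[k]) x = 0} (xs k)) :
    ∀ k : ℕ, 2 ≤ k →
      xs k < xs (k - 1) ∧ deriv (deriv (f^[k])) (xs k) < 0 ∧
      f^[k] (xs k) = f x_c ∧ f x_c > x_c := by
  obtain ⟨hax, hxb⟩ := hxc
  have hfd : Differentiable ℝ f := hf.differentiable (by norm_num)
  have hfd' : Differentiable ℝ (deriv f) := by
    have h : ContDiff ℝ 1 (deriv^[1] f) := ContDiff.iterate_deriv' 1 1 (by exact_mod_cast hf)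
    simpa using h.differentiable (by norm_num)
  have hCk : ∀ k, ContDiff ℝ 2 (f^[k]) := by
    intro k; induction k with
    | zero => simpa using contDiff_id
    | succ k ih => rw [Function.iterate_succ']; exact hf.comp ih
  have hDk : ∀ k, Differentiable ℝ (f^[k]) := fun k => (hCk k).differentiable (by norm_num)
  have hDk' : ∀ k, Differentiable ℝ (deriv (f^[k])) := by
    intro k
    have h : ContDiff ℝ 1 (deriv^[1] (f^[k])) :=
      ContDiff.iterate_deriv' 1 1 (by exact_mod_cast hCk k)
    simpa using h.differentiable (by norm_num)
  have maps : ∀ k, Set.MapsTo (f^[k]) (Icc a b) (Icc a b) := fun k => hmap.iterate k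
  have chain : ∀ (k : ℕ) (x : ℝ),
      deriv (f^[k+1]) x = deriv f (f^[k] x) * deriv (f^[k]) x := by
    intro k x
    rw [Function.iterate_succ']
    exact deriv_comp x (hfd _) ((hDk k) x)
  have hmono : StrictMonoOn f (Icc a x_c) := by
    apply strictMonoOn_of_deriv_pos (convex_Icc a x_c) hfd.continuous.continuousOn
    intro x hx
    rw [interior_Icc] at hx
    exact hup x ⟨hx.1.le, hx.2⟩
  have hanti : StrictAntiOn f (Icc x_c b) := by
    apply strictAntiOn_of_deriv_neg (convex_Icc x_c b) hfd.continuous.continuousOn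
    intro x hx
    rw [interior_Icc] at hx
    exact hdn x ⟨hx.1, hx.2.le⟩
  have hderiv_xc : deriv f x_c = 0 := by
    have hmax : IsLocalMax f x_c := by
      have hmem : Icc a b ∈ nhds x_c := Icc_mem_nhds hax hxb
      filter_upwards [hmem] with x hx
      rcases le_total x x_c with h | h
      · exact hmono.monotoneOn ⟨hx.1, h⟩ ⟨hax.le, le_rfl⟩ h
      · exact hanti.antitoneOn ⟨le_rfl, hxb.le⟩ ⟨h, hx.2⟩ h
    exact hmax.deriv_eq_zero
  have honly : ∀ x ∈ Icc a b, deriv f x = 0 → x = x_c := by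
    intro x hx h0
    rcases lt_trichotomy x x_c with h | h | h
    · exact absurd h0 (ne_of_gt (hup x ⟨hx.1, h⟩))
    · exact h
    · exact absurd h0 (ne_of_lt (hdn x ⟨h, hx.2⟩))
  have posd : ∀ (k : ℕ) (x : ℝ), x ∈ Icc a b → (∀ i < k, f^[i] x < x_c) →
      0 < deriv (f^[k]) x := by
    intro k
    induction k with
    | zero => intro x _ _; norm_num [Function.iterate_zero]
    | succ k ih =>
      intro x hx h
      rw [chain k x]
      have h1 : 0 < deriv f (f^[k] x) := hup _ ⟨(maps k hx).1, h k (Nat.lt_succ_self k)⟩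
      exact mul_pos h1 (ih x hx (fun i hi => h i (hi.trans (Nat.lt_succ_self k))))
  have haiter : ∀ i, f^[i] a < x_c := by
    intro i; cases i with
    | zero => simpa using hax
    | succ i => exact (hbd (i+1) (by omega)).1
  have hxslt : ∀ k, 1 ≤ k → a < xs k := by
    intro k hk
    have h := hxs k hk
    refine lt_of_le_of_ne h.1.1.1 (fun he => ?_)
    have hp := posd k a ⟨le_rfl, hab.le⟩ (fun i _ => haiter i)
    rw [he, h.1.2] at hp
    exact lt_irrefl 0 hp
  have hx1 : xs 1 = x_c := by
    have h := hxs 1 le_rfl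
    have h0 : deriv f (xs 1) = 0 := by
      have := h.1.2
      rwa [Function.iterate_one] at this
    exact honly _ h.1.1 h0
  -- the inductive step
  have step : ∀ k : ℕ, InvP f a x_c xs k →
      InvP f a x_c xs (k+1) ∧ xs (k+2) < xs (k+1) ∧
        deriv (deriv (f^[k+2])) (xs (k+2)) < 0 := by
    intro k hInv
    obtain ⟨hA, hB, hC⟩ := hInv
    have hxk1 := hxs (k+1) (by omega)
    have hm : xs (k+1) ∈ Icc a b := hxk1.1.1
    have haxs : a < xs (k+1) := hxslt (k+1) (by omega)
    have SM : StrictMonoOn (f^[k+1]) (Icc a (xs (k+1))) := by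
      apply strictMonoOn_of_deriv_pos (convex_Icc _ _) (hCk (k+1)).continuous.continuousOn
      intro x hx
      rw [interior_Icc] at hx
      exact posd (k+1) x ⟨hx.1.le, hx.2.le.trans hm.2⟩
        (fun i hi => hC x ⟨hx.1.le, hx.2⟩ i (by omega))
    have hvtop : f^[k+1] (xs (k+1)) = f x_c := by
      rw [Function.iterate_succ_apply', hA]
    have hvbot : f^[k+1] a < x_c := (hbd (k+1) (by omega)).1
    have hxcmem : x_c ∈ Ioo (f^[k+1] a) (f^[k+1] (xs (k+1))) := ⟨hvbot, hvtop ▸ hc⟩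
    obtain ⟨y, hy, hfy⟩ :=
      intermediate_value_Ioo haxs.le (hCk (k+1)).continuous.continuousOn hxcmem
    have hyI : y ∈ Icc a b := ⟨hy.1.le, hy.2.le.trans hm.2⟩
    have hiter_y : ∀ i ≤ k, f^[i] y < x_c := hC y ⟨hy.1.le, hy.2⟩
    have Dpos : 0 < deriv (f^[k+1]) y := posd (k+1) y hyI (fun i hi => hiter_y i (by omega))
    have hcrity : deriv (f^[k+2]) y = 0 := by
      rw [chain (k+1) y, hfy, hderiv_xc, zero_mul]
    have hxk2 := hxs (k+2) (by omega)
    have hle : xs (k+2) ≤ y := hxk2.2 ⟨hyI, hcrity⟩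
    have claim : ∀ x ∈ Ico a y, ∀ i ≤ k+1, f^[i] x < x_c := by
      intro x hx i hi
      have hx' : x ∈ Ico a (xs (k+1)) := ⟨hx.1, hx.2.trans hy.2⟩
      by_cases hik : i ≤ k
      · exact hC x hx' i hik
      · have hik' : i = k + 1 := by omega
        subst hik'
        have := SM ⟨hx.1, hx.2.le.trans hy.2.le⟩ ⟨hy.1.le, hy.2.le⟩ hx.2
        rwa [hfy] at this
    have heq : xs (k+2) = y := by
      rcases eq_or_lt_of_le hle with h | h
      · exact h
      · exfalso
        have hp := posd (k+2) (xs (k+2)) hxk2.1.1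
          (fun i hi => claim _ ⟨hxk2.1.1.1, h⟩ i (by omega))
        rw [hxk2.1.2] at hp
        exact lt_irrefl 0 hp
    have hsecond : deriv (deriv (f^[k+2])) y < 0 := by
      have hfunext : deriv (f^[k+2]) = fun x => deriv f (f^[k+1] x) * deriv (f^[k+1]) x :=
        funext (chain (k+1))
      have hu : DifferentiableAt ℝ (fun x => deriv f (f^[k+1] x)) y :=
        DifferentiableAt.comp y (hfd' (f^[k+1] y)) ((hDk (k+1)) y)
      have hderiv_u : deriv (fun x => deriv f (f^[k+1] x)) y =
          deriv (deriv f) (f^[k+1] y) * deriv (f^[k+1]) y := by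
        rw [← Function.comp_def, deriv_comp y (hfd' _) ((hDk (k+1)) y)]
      have heval : deriv (deriv (f^[k+2])) y =
          deriv (deriv f) x_c * deriv (f^[k+1]) y * deriv (f^[k+1]) y := by
        rw [hfunext, deriv_fun_mul hu ((hDk' (k+1)) y), hderiv_u, hfy, hderiv_xc, zero_mul,
          add_zero]
      rw [heval]
      exact mul_neg_of_neg_of_pos (mul_neg_of_neg_of_pos h2 Dpos) Dpos
    refine ⟨⟨heq ▸ hfy, fun i hi => heq ▸ hiter_y i (by omega), ?_⟩, heq ▸ hy.2, heq ▸ hsecond⟩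
    intro x hx i hi
    exact claim x ⟨hx.1, heq ▸ hx.2⟩ i hi
  have inv : ∀ k : ℕ, InvP f a x_c xs k := by
    intro k
    induction k with
    | zero =>
      refine ⟨by simpa using hx1, by omega, ?_⟩
      intro x hx i hi
      have hi0 : i = 0 := by omega
      subst hi0
      simpa using hx.2.trans_le (le_of_eq hx1)
    | succ k ih => exact (step k ih).1
  intro k hk
  obtain ⟨m, rfl⟩ : ∃ m, k = m + 2 := ⟨k - 2, by omega⟩
  obtain ⟨hInv', hlt, hdd⟩ := step m (inv m)
  have hk1 : m + 2 - 1 = m + 1 := by omega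
  rw [hk1]
  refine ⟨hlt, hdd, ?_, hc⟩
  rw [Function.iterate_succ_apply', hInv'.1]
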